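/- With L_d^k as above and discrete forces (F_d^k)⁻(z₀,z₁) = −(a_{k−1}/a_k)(b_k⁻+b_k⁺)∇f(z₀) and (F_d^k)⁺(z₀,z₁) = (b_k⁻+b_k⁺)∇f(z₀), a sequence (x̄_k) satisfies the forced discrete Euler–Lagrange equations D₁L_d^{k+1}(x̄_{k+1},x̄_{k+2}) + D₂L_d^k(x̄_k,x̄_{k+1}) + (F_d^{k+1})⁻(x̄_{k+1},x̄_{k+2}) + (F_d^k)⁺(x̄_k,x̄_{k+1}) = 0 if and only if x̄_{k+2} − x̄_{k+1} = μ_{k+1}(x̄_{k+1}−x̄_k) − η_{k+1}∇f(x̄_{k+1}) − μ_{k+1}(η_{k+1}∇f(x̄_{k+1}) − η_k∇f(x̄_k)), where μ_{k+1} = a_k/a_{k+1}, η_k = (b_k⁻+b_k⁺)/a_k. -/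

import Mathlib

open InnerProductSpace

lemma hasGradientAt_scaled {F : Type*} [NormedAddCommGroup F] [InnerProductSpace ℝ F]
    [CompleteSpace F] (A B C : ℝ) (c p : F) (g : F → ℝ)
    (hg : DifferentiableAt ℝ g p) :
    HasGradientAt (fun z => A * ((1/2 : ℝ) * ‖z - c‖^2) - B * g z - C)
      (A • (p - c) - B • gradient g p) p := by
  rw [hasGradientAt_iff_hasFDerivAt]
  have h1 : HasFDerivAt (fun z : F => ‖z - c‖^2) (2 • (innerSL ℝ (p - c))) p := by
    simpa using ((hasFDerivAt_id p).sub_const c).norm_sq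
  have h2 : HasFDerivAt (fun z => A * ((1/2 : ℝ) * ‖z - c‖^2) - B * g z - C)
      ((A • ((1/2 : ℝ) • (2 • (innerSL ℝ (p - c))))) - B • (fderiv ℝ g p)) p :=
    (((h1.const_smul (1/2 : ℝ)).const_smul A).sub
      ((hg.hasFDerivAt).const_smul B)).sub_const C
  refine h2.congr_fderiv ?_
  ext y
  simp [toDual_apply_apply, gradient, inner_sub_left, inner_smul_left, real_inner_smul_left]

theorem forced_discrete_EL_iff_nag (n : ℕ)
    (f : EuclideanSpace ℝ (Fin n) → ℝ) (hf : Differentiable ℝ f)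
    (a bm bp : ℕ → ℝ) (ha : ∀ k, a k ≠ 0)
    (Ld : ℕ → EuclideanSpace ℝ (Fin n) → EuclideanSpace ℝ (Fin n) → ℝ)
    (hLd : ∀ k z₀ z₁, Ld k z₀ z₁ =
      a k * ((1/2 : ℝ) * ‖z₁ - z₀‖^2) - bm k * f z₀ - bp (k+1) * f z₁)
    (x : ℕ → EuclideanSpace ℝ (Fin n)) :
    (∀ k, gradient (fun z => Ld (k+1) z (x (k+2))) (x (k+1))
        + gradient (fun z => Ld k (x k) z) (x (k+1))
        + (-((a k / a (k+1)) * (bm (k+1) + bp (k+1)))) • gradient f (x (k+1))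
        + (bm k + bp k) • gradient f (x k) = 0) ↔
    (∀ k, x (k+2) - x (k+1) =
      (a k / a (k+1)) • (x (k+1) - x k)
        - ((bm (k+1) + bp (k+1)) / a (k+1)) • gradient f (x (k+1))
        - (a k / a (k+1)) •
            (((bm (k+1) + bp (k+1)) / a (k+1)) • gradient f (x (k+1))
              - ((bm k + bp k) / a k) • gradient f (x k))) := by
  have step : ∀ k,
      (gradient (fun z => Ld (k+1) z (x (k+2))) (x (k+1))
        + gradient (fun z => Ld k (x k) z) (x (k+1))
        + (-((a k / a (k+1)) * (bm (k+1) + bp (k+1)))) • gradient f (x (k+1))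
        + (bm k + bp k) • gradient f (x k) = 0) ↔
      (x (k+2) - x (k+1) =
      (a k / a (k+1)) • (x (k+1) - x k)
        - ((bm (k+1) + bp (k+1)) / a (k+1)) • gradient f (x (k+1))
        - (a k / a (k+1)) •
            (((bm (k+1) + bp (k+1)) / a (k+1)) • gradient f (x (k+1))
              - ((bm k + bp k) / a k) • gradient f (x k))) := by
    intro k
    have hG1 : gradient (fun z => Ld (k+1) z (x (k+2))) (x (k+1))
        = a (k+1) • (x (k+1) - x (k+2)) - bm (k+1) • gradient f (x (k+1)) := by
      have he : (fun z => Ld (k+1) z (x (k+2)))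
          = fun z => a (k+1) * ((1/2:ℝ) * ‖z - x (k+2)‖^2) - bm (k+1) * f z
              - bp (k+2) * f (x (k+2)) := by
        funext z; rw [hLd, norm_sub_rev]
      rw [he]
      exact (hasGradientAt_scaled _ _ _ _ _ _ (hf _)).gradient
    have hG2 : gradient (fun z => Ld k (x k) z) (x (k+1))
        = a k • (x (k+1) - x k) - bp (k+1) • gradient f (x (k+1)) := by
      have he : (fun z => Ld k (x k) z)
          = fun z => a k * ((1/2:ℝ) * ‖z - x k‖^2) - bp (k+1) * f z
              - bm k * f (x k) := by
        funext z; rw [hLd]; ring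
      rw [he]
      exact (hasGradientAt_scaled _ _ _ _ _ _ (hf _)).gradient
    rw [hG1, hG2]
    have key : a (k+1) • (x (k+1) - x (k+2)) - bm (k+1) • gradient f (x (k+1))
        + (a k • (x (k+1) - x k) - bp (k+1) • gradient f (x (k+1)))
        + (-((a k / a (k+1)) * (bm (k+1) + bp (k+1)))) • gradient f (x (k+1))
        + (bm k + bp k) • gradient f (x k)
        = a (k+1) • (((a k / a (k+1)) • (x (k+1) - x k)
            - ((bm (k+1) + bp (k+1)) / a (k+1)) • gradient f (x (k+1))
            - (a k / a (k+1)) •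
                (((bm (k+1) + bp (k+1)) / a (k+1)) • gradient f (x (k+1))
                  - ((bm k + bp k) / a k) • gradient f (x k)))
            - (x (k+2) - x (k+1))) := by
      match_scalars <;> field_simp [ha] <;> ring
    rw [key, smul_eq_zero, sub_eq_zero]
    simp only [ha (k+1), false_or]
    exact eq_comm
  exact forall_congr' step
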